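/- For the Rosen continued fraction of odd index k, letting R be the positive root of R^2 + (2-λ)R - 1 = 0, one has |x - p_n/q_n| ≤ 1/(q_n^2 (1/R - λ/2)), assuming q_{n+1}/q_n > 1/R. -/

import Mathlib

open Real

/-- The Rosen continued fraction map `S(x) = |1/x| - [|1/x|]_λ` on `[-λ/2, λ/2)`,
where `[w]_λ = bλ` for the unique integer `b` with `w ∈ [bλ - λ/2, bλ + λ/2)`. -/
noncomputable def rosenMap (lam : ℝ) (x : ℝ) : ℝ :=
  if x = 0 then 0 else |x⁻¹| - (⌊|x⁻¹| / lam + 1 / 2⌋ : ℤ) * lam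

/-- The sign digit `ε_{n+1}(x) = sgn(S^n x)`. -/
noncomputable def rosenEps (lam x : ℝ) (n : ℕ) : ℝ :=
  Real.sign ((rosenMap lam)^[n] x)

/-- The digit `a_{n+1}(x) = [|1/S^n x|]_λ`. -/
noncomputable def rosenA (lam x : ℝ) (n : ℕ) : ℝ :=
  (⌊|((rosenMap lam)^[n] x)⁻¹| / lam + 1 / 2⌋ : ℤ) * lam

/-- The convergent matrix `[[p_{n-1}, p_n], [q_{n-1}, q_n]] = ∏_{i=1}^n [[0, ε_i], [1, a_i]]`. -/
noncomputable def rosenMat (lam x : ℝ) (n : ℕ) : Matrix (Fin 2) (Fin 2) ℝ :=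
  ((List.range n).map (fun i => !![0, rosenEps lam x i; 1, rosenA lam x i])).prod

/-- The numerator `p_n` of the `n`-th Rosen convergent. -/
noncomputable def rosenP (lam x : ℝ) (n : ℕ) : ℝ := rosenMat lam x n 0 1

/-- The denominator `q_n` of the `n`-th Rosen convergent. -/
noncomputable def rosenQ (lam x : ℝ) (n : ℕ) : ℝ := rosenMat lam x n 1 1

/-- For the Rosen continued fraction of odd index `k`, letting `R` be the positive
root of `R² + (2-λ)R - 1 = 0`, one has `|x - p_n/q_n| ≤ 1/(q_n² (1/R - λ/2))`,
assuming `q_{n+1}/q_n > 1/R`. -/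
theorem rosen_error_bound_odd (k : ℕ) (hk : 3 ≤ k) (hko : Odd k) (lam : ℝ)
    (hlam : lam = 2 * Real.cos (π / k)) (R : ℝ) (hR : 0 < R)
    (hroot : R ^ 2 + (2 - lam) * R - 1 = 0)
    (x : ℝ) (hx : x ∈ Set.Ico (-lam / 2) (lam / 2))
    (hinf : ∀ i : ℕ, (rosenMap lam)^[i] x ≠ 0)
    (hq : ∀ n : ℕ, 1 / R < rosenQ lam x (n + 1) / rosenQ lam x n)
    (hS : ∀ n : ℕ, |(rosenMap lam)^[n] x| ≤ lam / 2) (n : ℕ) :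
    |x - rosenP lam x n / rosenQ lam x n| ≤
      1 / (rosenQ lam x n ^ 2 * (1 / R - lam / 2)) := by
  have hk3 : (3:ℝ) ≤ (k:ℝ) := by exact_mod_cast hk
  have hkpos : (0:ℝ) < (k:ℝ) := by linarith
  have hpik : 0 < π / k := by positivity
  have hpik2 : π / (k:ℝ) ≤ π := by
    rw [div_le_iff₀ hkpos]
    nlinarith [Real.pi_pos]
  have hlam2 : lam < 2 := by
    have h := Real.cos_lt_cos_of_nonneg_of_le_pi (le_refl (0:ℝ)) hpik2 hpik
    rw [Real.cos_zero] at h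
    rw [hlam]; linarith
  have hlam0 : 0 ≤ lam := by
    have h := hS 0
    rw [Function.iterate_zero_apply] at h
    linarith [abs_nonneg x]
  -- facts about R
  have hRlam : lam / 2 < R := by
    nlinarith [sq_nonneg (lam - 2), sq_nonneg (lam / 2 - R)]
  have hRne : R ≠ 0 := ne_of_gt hR
  have hinvR : 1 / R = R + 2 - lam := by
    field_simp
    linear_combination -hroot
  have hposR : 0 < 1 / R - lam / 2 := by rw [hinvR]; linarith
  have hposS : 0 < 1 - R * (lam / 2) := by
    have h2 : (1 / R - lam / 2) * R = 1 - R * (lam / 2) := by field_simp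
    rw [← h2]; exact mul_pos hposR hR
  -- matrix recursion and entries
  have hmat : ∀ m, rosenMat lam x (m + 1)
      = rosenMat lam x m * !![0, rosenEps lam x m; 1, rosenA lam x m] := by
    intro m
    simp [rosenMat, List.range_succ]
  have hent0 : ∀ (M : Matrix (Fin 2) (Fin 2) ℝ) (e a : ℝ) (i : Fin 2),
      (M * !![0, e; 1, a]) i 0 = M i 1 := by
    intro M e a i
    simp [Matrix.mul_apply, Fin.sum_univ_two]
  have hent1 : ∀ (M : Matrix (Fin 2) (Fin 2) ℝ) (e a : ℝ) (i : Fin 2),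
      (M * !![0, e; 1, a]) i 1 = M i 0 * e + M i 1 * a := by
    intro M e a i
    simp [Matrix.mul_apply, Fin.sum_univ_two]
  have hM0 : rosenMat lam x 0 = 1 := by simp [rosenMat]
  have hQ'succ : ∀ m, rosenMat lam x (m + 1) 1 0 = rosenQ lam x m := by
    intro m; rw [hmat m]; exact hent0 _ _ _ 1
  have hP'succ : ∀ m, rosenMat lam x (m + 1) 0 0 = rosenP lam x m := by
    intro m; rw [hmat m]; exact hent0 _ _ _ 0
  have hQsucc : ∀ m, rosenQ lam x (m + 1)
      = rosenMat lam x m 1 0 * rosenEps lam x m + rosenQ lam x m * rosenA lam x m := by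
    intro m
    show rosenMat lam x (m + 1) 1 1 = _
    rw [hmat m]; exact hent1 _ _ _ 1
  have hPsucc : ∀ m, rosenP lam x (m + 1)
      = rosenMat lam x m 0 0 * rosenEps lam x m + rosenP lam x m * rosenA lam x m := by
    intro m
    show rosenMat lam x (m + 1) 0 1 = _
    rw [hmat m]; exact hent1 _ _ _ 0
  have hQ0 : rosenQ lam x 0 = 1 := by simp [rosenQ, hM0, Matrix.one_apply]
  -- sign facts
  have hsign : ∀ m, ((rosenMap lam)^[m] x) * |((rosenMap lam)^[m] x)|⁻¹ = rosenEps lam x m := by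
    intro m
    rcases (hinf m).lt_or_gt with h | h
    · rw [abs_of_neg h, rosenEps, Real.sign_of_neg h, inv_neg, mul_neg,
        mul_inv_cancel₀ (hinf m)]
    · rw [abs_of_pos h, rosenEps, Real.sign_of_pos h, mul_inv_cancel₀ (hinf m)]
  have habseps : ∀ m, |rosenEps lam x m| = 1 := by
    intro m
    rcases (hinf m).lt_or_gt with h | h
    · rw [rosenEps, Real.sign_of_neg h]; norm_num
    · rw [rosenEps, Real.sign_of_pos h]; norm_num
  have hrel : ∀ m, ((rosenMap lam)^[m] x) * (rosenA lam x m + (rosenMap lam)^[m + 1] x)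
      = rosenEps lam x m := by
    intro m
    have hstep : (rosenMap lam)^[m + 1] x = |((rosenMap lam)^[m] x)⁻¹| - rosenA lam x m := by
      rw [Function.iterate_succ_apply', rosenMap, if_neg (hinf m), rosenA]
    rw [hstep, abs_inv]
    have e : rosenA lam x m + (|((rosenMap lam)^[m] x)|⁻¹ - rosenA lam x m)
        = |((rosenMap lam)^[m] x)|⁻¹ := by ring
    rw [e]; exact hsign m
  -- key Möbius identity
  have key : ∀ m, x * (rosenMat lam x m 1 0 * (rosenMap lam)^[m] x + rosenQ lam x m)
      = rosenMat lam x m 0 0 * (rosenMap lam)^[m] x + rosenP lam x m := by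
    intro m
    induction m with
    | zero => simp [hM0, rosenQ, rosenP, Matrix.one_apply]
    | succ m ih =>
      rw [hQ'succ m, hQsucc m, hP'succ m, hPsucc m]
      apply mul_left_cancel₀ (hinf m)
      linear_combination (x * rosenQ lam x m - rosenP lam x m) * hrel m
        + rosenEps lam x m * ih
  -- determinant
  have hdet : ∀ m, |rosenMat lam x m 0 0 * rosenQ lam x m
      - rosenP lam x m * rosenMat lam x m 1 0| = 1 := by
    intro m
    induction m with
    | zero => simp [hM0, rosenQ, rosenP, Matrix.one_apply]
    | succ m ih =>
      rw [hQ'succ m, hQsucc m, hP'succ m, hPsucc m]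
      have e : rosenP lam x m *
            (rosenMat lam x m 1 0 * rosenEps lam x m + rosenQ lam x m * rosenA lam x m)
          - (rosenMat lam x m 0 0 * rosenEps lam x m + rosenP lam x m * rosenA lam x m)
            * rosenQ lam x m
          = -(rosenEps lam x m * (rosenMat lam x m 0 0 * rosenQ lam x m
              - rosenP lam x m * rosenMat lam x m 1 0)) := by ring
      calc |rosenP lam x m *
            (rosenMat lam x m 1 0 * rosenEps lam x m + rosenQ lam x m * rosenA lam x m)
          - (rosenMat lam x m 0 0 * rosenEps lam x m + rosenP lam x m * rosenA lam x m)
            * rosenQ lam x m|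
          = |rosenEps lam x m| * |rosenMat lam x m 0 0 * rosenQ lam x m
              - rosenP lam x m * rosenMat lam x m 1 0| := by rw [e, abs_neg, abs_mul]
        _ = 1 := by rw [habseps m, one_mul, ih]
  -- positivity of q
  have hQpos : ∀ m, 0 < rosenQ lam x m := by
    intro m
    induction m with
    | zero => rw [hQ0]; norm_num
    | succ m ih =>
      have h2 : 0 < rosenQ lam x (m + 1) / rosenQ lam x m :=
        lt_trans (div_pos one_pos hR) (hq m)
      have h3 := mul_pos h2 ih
      rwa [div_mul_cancel₀ _ (ne_of_gt ih)] at h3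
  have hQ'nonneg : ∀ m, 0 ≤ rosenMat lam x m 1 0 := by
    intro m
    cases m with
    | zero => simp [hM0, Matrix.one_apply]
    | succ m => rw [hQ'succ m]; exact (hQpos m).le
  have hQ'lt : ∀ m, rosenMat lam x m 1 0 < R * rosenQ lam x m := by
    intro m
    cases m with
    | zero =>
      rw [hQ0]
      simpa [hM0, Matrix.one_apply] using hR
    | succ m =>
      rw [hQ'succ m]
      have h2 := (lt_div_iff₀ (hQpos m)).mp (hq m)
      have h3 := mul_lt_mul_of_pos_left h2 hR
      rwa [show R * (1 / R * rosenQ lam x m) = rosenQ lam x m by field_simp] at h3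
  -- final estimate
  have hTle := hS n
  have hq'0 := hQ'nonneg n
  have hq'lt := hQ'lt n
  have hqpos := hQpos n
  have hD1 : rosenQ lam x n * (1 - R * (lam / 2))
      ≤ rosenMat lam x n 1 0 * (rosenMap lam)^[n] x + rosenQ lam x n := by
    nlinarith [mul_le_mul_of_nonneg_left (neg_abs_le ((rosenMap lam)^[n] x)) hq'0,
      mul_le_mul_of_nonneg_left hTle hq'0,
      mul_le_mul_of_nonneg_right hq'lt.le (by linarith : (0:ℝ) ≤ lam / 2)]
  have hDpos : 0 < rosenMat lam x n 1 0 * (rosenMap lam)^[n] x + rosenQ lam x n :=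
    lt_of_lt_of_le (mul_pos hqpos hposS) hD1
  have hxeq : x - rosenP lam x n / rosenQ lam x n
      = (rosenMap lam)^[n] x * (rosenMat lam x n 0 0 * rosenQ lam x n
          - rosenP lam x n * rosenMat lam x n 1 0)
        / (rosenQ lam x n * (rosenMat lam x n 1 0 * (rosenMap lam)^[n] x + rosenQ lam x n)) := by
    have hkey := key n
    rw [eq_div_iff (mul_pos hqpos hDpos).ne', sub_mul,
      show rosenP lam x n / rosenQ lam x n * (rosenQ lam x n *
        (rosenMat lam x n 1 0 * (rosenMap lam)^[n] x + rosenQ lam x n))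
        = rosenP lam x n * (rosenMat lam x n 1 0 * (rosenMap lam)^[n] x + rosenQ lam x n) by
        rw [← mul_assoc, div_mul_cancel₀ _ hqpos.ne']]
    linear_combination (rosenQ lam x n) * hkey
  rw [hxeq, abs_div, abs_mul, hdet n, mul_one,
    abs_of_pos (mul_pos hqpos hDpos)]
  rw [div_le_div_iff₀ (mul_pos hqpos hDpos) (mul_pos (pow_pos hqpos 2) hposR)]
  have e1 : |(rosenMap lam)^[n] x| ≤ R := le_trans hTle hRlam.le
  have e2 : |(rosenMap lam)^[n] x| * (rosenQ lam x n ^ 2 * (1 / R - lam / 2))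
      ≤ R * (rosenQ lam x n ^ 2 * (1 / R - lam / 2)) :=
    mul_le_mul_of_nonneg_right e1 (le_of_lt (mul_pos (pow_pos hqpos 2) hposR))
  have e3 : R * (rosenQ lam x n ^ 2 * (1 / R - lam / 2))
      = rosenQ lam x n ^ 2 * (1 - R * (lam / 2)) := by field_simp
  have e4 := mul_le_mul_of_nonneg_left hD1 hqpos.le
  nlinarith [e2, e3, e4]
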